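/- For every natural number t ≥ 0 and all real numbers 1 ≤ x ≤ y: Φ_t(x) > 0, Φ_{t+1}(x)/Φ_t(x) ≥ 1, and Φ_{t+1}(x)/Φ_t(x) ≤ Φ_{t+1}(y)/Φ_t(y); i.e., on [1,∞) the ratio Φ_{t+1}/Φ_t is at least 1 and monotonically nondecreasing. -/
import Mathlib


/-- Φ_t, the degree-t Chebyshev polynomial of the first kind over ℝ:
Φ_0(x)=1, Φ_1(x)=x, Φ_{t+1}(x)=2x·Φ_t(x)−Φ_{t−1}(x). -/
noncomputable def Phi (t : ℕ) : Polynomial ℝ := Polynomial.Chebyshev.T ℝ t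

lemma Phi_rec (t : ℕ) (x : ℝ) :
    (Phi (t+2)).eval x = 2*x*(Phi (t+1)).eval x - (Phi t).eval x := by
  simp only [Phi]
  push_cast
  rw [Polynomial.Chebyshev.T_add_two]
  simp [mul_assoc]

lemma Phi_aux (t : ℕ) : ∀ x : ℝ, 1 ≤ x →
    0 < (Phi t).eval x ∧ x * (Phi t).eval x ≤ (Phi (t+1)).eval x ∧
    ∀ y : ℝ, x ≤ y →
      (Phi (t+1)).eval x / (Phi t).eval x ≤ (Phi (t+1)).eval y / (Phi t).eval y := by
  induction t with
  | zero =>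
    intro x hx
    simp only [Phi, Nat.cast_zero, Nat.cast_one, zero_add,
      Polynomial.Chebyshev.T_zero, Polynomial.Chebyshev.T_one,
      Polynomial.eval_one, Polynomial.eval_X]
    refine ⟨one_pos, by linarith, fun y hxy => by simpa using hxy⟩
  | succ t ih =>
    intro x hx
    obtain ⟨hpos, hmul, hmono⟩ := ih x hx
    have hx0 : (0:ℝ) < x := lt_of_lt_of_le one_pos hx
    have h1 : (Phi t).eval x ≤ (Phi (t+1)).eval x := by nlinarith
    have hpos1 : 0 < (Phi (t+1)).eval x := lt_of_lt_of_le hpos h1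
    refine ⟨hpos1, ?_, ?_⟩
    · rw [Phi_rec]
      nlinarith
    · intro y hxy
      have hy : 1 ≤ y := le_trans hx hxy
      obtain ⟨hposy, hmuly, _⟩ := ih y hy
      have hy0 : (0:ℝ) < y := lt_of_lt_of_le one_pos hy
      have hposy1 : 0 < (Phi (t+1)).eval y := by nlinarith
      have hrx : 1 ≤ (Phi (t+1)).eval x / (Phi t).eval x := by
        rw [le_div_iff₀ hpos]; nlinarith
      have hry : 1 ≤ (Phi (t+1)).eval y / (Phi t).eval y := by
        rw [le_div_iff₀ hposy]; nlinarith
      have hr := hmono y hxy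
      rw [Phi_rec, Phi_rec]
      rw [sub_div, sub_div, mul_div_assoc, mul_div_assoc,
        div_self (ne_of_gt hpos1), div_self (ne_of_gt hposy1), mul_one, mul_one]
      have hinv : (Phi t).eval y / (Phi (t+1)).eval y ≤ (Phi t).eval x / (Phi (t+1)).eval x := by
        rw [div_le_div_iff₀ hposy1 hpos1]
        have h2 := (div_le_div_iff₀ hpos hposy).mp hr
        linarith
      linarith

/-- On [1,∞), Φ_t is positive and the ratio Φ_{t+1}/Φ_t is at least 1 and
monotonically nondecreasing. -/
theorem chebyshev_ratio_monotone (t : ℕ) (x y : ℝ) (hx : 1 ≤ x) (hxy : x ≤ y) :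
    0 < (Phi t).eval x ∧
    1 ≤ (Phi (t + 1)).eval x / (Phi t).eval x ∧
    (Phi (t + 1)).eval x / (Phi t).eval x ≤ (Phi (t + 1)).eval y / (Phi t).eval y := by
  obtain ⟨hpos, hmul, hmono⟩ := Phi_aux t x hx
  refine ⟨hpos, ?_, hmono y hxy⟩
  rw [le_div_iff₀ hpos]; nlinarith
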